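/- Let q be an odd prime power, d a non-square in F_q*, α in F_{q^2} with α² = d, Q = {γ in F_{q^2} : γ^{q+1} = 1}, Q₀ = {γ² : γ in Q}, and Q₁ = Q \ Q₀. If q ≡ 1 (mod 4), then in the Paley graph P(q²) the set ψ(α·Q₁) is a clique, α ∉ ψ(α·Q₁), and α is adjacent to no element of ψ(α·Q₁); i.e., ψ(α·Q₁ ∪ {α}) induces the disjoint union of the clique ψ(α·Q₁) and the isolated vertex α. If q ≡ 3 (mod 4), then ψ(α·Q₁) is a clique in P(q²), the vertices α and −α are adjacent, and no element of ψ(α·Q₁) is adjacent to α or to −α; i.e., ψ(α·Q₁ ∪ {0, α}) induces the disjoint union of the clique ψ(α·Q₁) and the edge {α, −α}. -/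

import Mathlib

/-- A clique in the Paley graph P(q^2): any two distinct elements differ by a square. -/
def paleyClique {F : Type*} [Field F] (C : Set F) : Prop :=
  ∀ x ∈ C, ∀ y ∈ C, x ≠ y → IsSquare (x - y)

/-- if q ≡ 1 (mod 4), then ψ(α·Q₁ ∪ {α}) induces the disjoint union
of the clique ψ(α·Q₁) and the isolated vertex α in P(q²); if q ≡ 3 (mod 4), then
ψ(α·Q₁ ∪ {0, α}) induces the disjoint union of the clique ψ(α·Q₁) and the edge
{α, −α}. -/
theorem stmt_19 (q : ℕ) (hq : Odd q) (hq' : IsPrimePow q)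
    (F : Type*) [Field F] (hF : Nat.card F = q ^ 2)
    (K : Subfield F) (hK : Nat.card K = q)
    (d : F) (hdK : d ∈ K) (hd0 : d ≠ 0) (hdns : ¬ ∃ c ∈ K, c * c = d)
    (α : F) (hα : α ^ 2 = d)
    (ψ : F → F) (hψ : ∀ γ : F, γ ≠ α → ψ γ = (α * γ + d) / (γ - α)) (hψα : ψ α = α)
    (Q Q₀ Q₁ : Set F) (hQ : Q = {γ : F | γ ^ (q + 1) = 1})
    (hQ₀ : Q₀ = (fun γ => γ ^ 2) '' Q) (hQ₁ : Q₁ = Q \ Q₀) :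
    (q % 4 = 1 →
      paleyClique (ψ '' ((fun x => α * x) '' Q₁)) ∧
      α ∉ ψ '' ((fun x => α * x) '' Q₁) ∧
      ∀ x ∈ ψ '' ((fun x => α * x) '' Q₁), ¬ IsSquare (α - x)) ∧
    (q % 4 = 3 →
      paleyClique (ψ '' ((fun x => α * x) '' Q₁)) ∧
      α ≠ -α ∧ IsSquare (α - (-α)) ∧
      α ∉ ψ '' ((fun x => α * x) '' Q₁) ∧ -α ∉ ψ '' ((fun x => α * x) '' Q₁) ∧
      ∀ x ∈ ψ '' ((fun x => α * x) '' Q₁),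
        ¬ IsSquare (α - x) ∧ ¬ IsSquare (-α - x)) := by
  classical
  obtain ⟨m, hm⟩ := id hq
  have hq2 : 2 ≤ q := hq'.two_le
  -- finiteness
  haveI : Finite F := Nat.finite_of_card_ne_zero (by rw [hF]; positivity)
  haveI : Fintype F := Fintype.ofFinite F
  haveI : Fintype K := Fintype.ofFinite K
  have hcardF : Fintype.card F = q ^ 2 := by rw [← Nat.card_eq_fintype_card, hF]
  have hcardK : Fintype.card K = q := by rw [← Nat.card_eq_fintype_card, hK]
  -- characteristic facts
  have hoddF : Fintype.card F % 2 = 1 := by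
    rw [hcardF]; have : Odd (q ^ 2) := hq.pow; rw [Nat.odd_iff] at this; omega
  have hchar : ringChar F ≠ 2 := by
    intro h
    have := FiniteField.even_card_of_char_two h
    omega
  have hcharK : ringChar K ≠ 2 := by
    intro h
    have := FiniteField.even_card_of_char_two h
    rw [hcardK] at this; omega
  have h2 : (2 : F) ≠ 0 := Ring.two_ne_zero hchar
  have hne : (-1 : F) ≠ 1 := Ring.neg_one_ne_one_of_char_ne_two hchar
  -- frobenius
  set p := ringChar F with hpdef
  haveI hcp : CharP F p := ringChar.charP F
  obtain ⟨n, hp, hcards⟩ := FiniteField.card F p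
  haveI : Fact p.Prime := ⟨hp⟩
  obtain ⟨r, k, hr, hk0, hrk⟩ := hq'
  have hpr : p = r := by
    have hq2p : q ^ 2 = p ^ (n : ℕ) := by rw [← hcardF, hcards]
    have h1 : p ∣ q ^ 2 := hq2p ▸ dvd_pow_self p (by exact_mod_cast n.pos.ne')
    have h1' : p ∣ q := hp.dvd_of_dvd_pow h1
    have h2 : p ∣ r := hp.dvd_of_dvd_pow (hrk ▸ h1')
    exact ((Nat.prime_dvd_prime_iff_eq hp hr.nat_prime).mp h2)
  have hqpow : p ^ k = q := by rw [hpr]; exact hrk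
  have hfa : ∀ a b : F, (a + b) ^ q = a ^ q + b ^ q := by
    intro a b
    have := map_add (iterateFrobenius F p k) a b
    simpa only [iterateFrobenius_def, hqpow] using this
  have hfs : ∀ a b : F, (a - b) ^ q = a ^ q - b ^ q := by
    intro a b
    have := map_sub (iterateFrobenius F p k) a b
    simpa only [iterateFrobenius_def, hqpow] using this
  -- elements of K are fixed by x ↦ x^q
  have hKfix : ∀ x : F, x ∈ K → x ^ q = x := by
    intro x hx
    have h1 : (⟨x, hx⟩ : K) ^ q = ⟨x, hx⟩ := by
      rw [← hcardK]; exact FiniteField.pow_card _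
    have := congrArg (Subtype.val) h1
    push_cast at this
    exact this
  -- alpha facts
  have hα0 : α ≠ 0 := by rintro rfl; exact hd0 (by rw [← hα]; ring)
  have hαK : α ∉ K := fun h => hdns ⟨α, h, by rw [← hα]; ring⟩
  have hfixmem : ∀ x : F, x ^ q = x → x ∈ K := by
    intro x hx
    by_contra hxK
    set P : Polynomial F := Polynomial.X ^ q - Polynomial.X with hP
    have hdegP : P.natDegree = q := by
      rw [hP, Polynomial.natDegree_sub_eq_left_of_natDegree_lt] <;>
        simp only [Polynomial.natDegree_X_pow, Polynomial.natDegree_X]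
      omega
    have hP0 : P ≠ 0 := fun h => by rw [h] at hdegP; simp at hdegP; omega
    have hroot : ∀ z : F, z ^ q = z → z ∈ P.roots := by
      intro z hz
      rw [Polynomial.mem_roots hP0]
      simp [hP, Polynomial.IsRoot, sub_eq_zero, hz]
    set KF : Finset F := Finset.univ.image (fun a : K => (a : F)) with hKF
    have hKFcard : KF.card = q := by
      rw [hKF, Finset.card_image_of_injective _ Subtype.val_injective,
        Finset.card_univ, hcardK]
    have hxKF : x ∉ KF := by
      rw [hKF]; simp only [Finset.mem_image, Finset.mem_univ, true_and]
      rintro ⟨a, rfl⟩; exact hxK a.2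
    have hsub : insert x KF ⊆ P.roots.toFinset := by
      intro z hz
      rw [Multiset.mem_toFinset]
      rcases Finset.mem_insert.mp hz with rfl | hz
      · exact hroot z hx
      · rw [hKF] at hz
        simp only [Finset.mem_image, Finset.mem_univ, true_and] at hz
        obtain ⟨a, rfl⟩ := hz
        exact hroot _ (hKfix _ a.2)
    have hge : q + 1 ≤ P.roots.toFinset.card := by
      have := Finset.card_le_card hsub
      rwa [Finset.card_insert_of_notMem hxKF, hKFcard] at this
    have hle : P.roots.toFinset.card ≤ q := by
      calc P.roots.toFinset.card ≤ Multiset.card P.roots := Multiset.toFinset_card_le _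
        _ ≤ P.natDegree := Polynomial.card_roots' P
        _ = q := hdegP
    omega
  have hαq : α ^ q = -α := by
    have hd2 : (α ^ q) ^ 2 = d := by
      rw [← pow_mul, mul_comm, pow_mul, hα, hKfix d hdK]
    have hsplit : (α ^ q - α) * (α ^ q + α) = 0 := by
      have : (α ^ q) ^ 2 - α ^ 2 = 0 := by rw [hd2, hα, sub_self]
      linear_combination this
    rcases mul_eq_zero.mp hsplit with h | h
    · exfalso
      have hfix : α ^ q = α := by linear_combination h
      exact hαK (hfixmem α hfix)
    · linear_combination h
  -- power computations
  have hcard2 : Fintype.card F / 2 = (q + 1) * m := by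
    rw [hcardF, hm]
    have : (2 * m + 1) ^ 2 = 2 * ((2 * m + 1 + 1) * m) + 1 := by ring
    omega
  have hdm : d ^ m = -1 := by
    have hd' : (⟨d, hdK⟩ : K) ≠ 0 := fun h => hd0 (by simpa using congrArg Subtype.val h)
    have hc2 : Fintype.card K / 2 = m := by rw [hcardK, hm]; omega
    have hns : ¬ IsSquare (⟨d, hdK⟩ : K) := by
      rintro ⟨c, hc⟩
      exact hdns ⟨(c : F), c.2, by simpa using (congrArg Subtype.val hc).symm⟩
    rcases FiniteField.pow_dichotomy hcharK hd' with h | h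
    · exact absurd ((FiniteField.isSquare_iff hcharK hd').mpr h) hns
    · rw [hc2] at h
      have := congrArg (Subtype.val) h
      push_cast at this
      exact this
  have h2q : (2 : F) ^ q = 2 := by
    have h := hfa 1 1
    norm_num at h
    convert h using 2 <;> norm_num
  have h4 : (4 : F) ^ m = 1 := by
    have e1 : (2 : F) ^ (2 * m) * 2 = 2 := by
      rw [← pow_succ, ← hm]; exact h2q
    have e2 : (2 : F) ^ (2 * m) = 1 := by
      field_simp at e1; exact e1
    calc (4 : F) ^ m = (2 : F) ^ (2 * m) := by rw [pow_mul]; norm_num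
      _ = 1 := e2
  have hone : (1 : F) ∈ Q₀ := by
    rw [hQ₀]
    exact ⟨1, by rw [hQ]; simp, by simp⟩
  have hsq_of_fix : ∀ z : F, z ≠ 0 → z ^ q = z → IsSquare z := by
    intro z hz hzq
    rw [FiniteField.isSquare_iff hchar hz, hcard2]
    have hz2m : z ^ (2 * m) = 1 := by
      have : z ^ (2 * m) * z = z := by rw [← pow_succ, ← hm]; exact hzq
      field_simp at this; exact this
    rw [show (q + 1) * m = (2 * m) * (m + 1) by rw [hm]; ring, pow_mul, hz2m, one_pow]
  have hfix_ne : ∀ z : F, z ^ q = z → z ≠ α ∧ z ≠ -α := by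
    intro z hz
    have hzK : z ∈ K := hfixmem z hz
    constructor
    · intro h; rw [h] at hzK; exact hαK hzK
    · intro h; rw [h] at hzK; exact hαK (by simpa using K.neg_mem hzK)
  -- the main computation
  have hmem : ∀ x ∈ ψ '' ((fun x => α * x) '' Q₁), x ^ q = x ∧ (x ^ 2 - d) ^ m = -1 := by
    rintro x ⟨y, ⟨σ, hσ, rfl⟩, rfl⟩
    rw [hQ₁] at hσ
    obtain ⟨hσQ, hσ0'⟩ := hσ
    rw [hQ, Set.mem_setOf_eq] at hσQ
    have hσ0 : σ ≠ 0 := by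
      rintro rfl
      rw [zero_pow (by omega)] at hσQ
      exact one_ne_zero hσQ.symm
    have hσ1 : σ ≠ 1 := by rintro rfl; exact hσ0' hone
    have hσ1' : σ - 1 ≠ 0 := sub_ne_zero.mpr hσ1
    have hσinv : σ ^ q = σ⁻¹ :=
      eq_inv_of_mul_eq_one_left (by rw [← pow_succ]; exact hσQ)
    have hσm : σ ^ (m + 1) = -1 := by
      have hsq : σ ^ (m + 1) = 1 ∨ σ ^ (m + 1) = -1 := by
        refine mul_self_eq_one_iff.mp ?_
        rw [← pow_add, show m + 1 + (m + 1) = q + 1 by omega]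
        exact hσQ
      rcases hsq with h | h
      · exfalso
        apply hσ0'
        have hsqF : IsSquare σ := by
          rw [FiniteField.isSquare_iff hchar hσ0, hcard2, pow_mul, hσQ, one_pow]
        obtain ⟨τ, hτ⟩ := hsqF
        have hτ2 : τ ^ 2 = σ := by rw [hτ]; ring
        rw [hQ₀]
        refine ⟨τ, ?_, hτ2⟩
        rw [hQ, Set.mem_setOf_eq, show q + 1 = 2 * (m + 1) by omega, pow_mul, hτ2]
        exact h
      · exact h
    have hne' : α * σ ≠ α := by
      intro h
      exact hσ1 (mul_left_cancel₀ hα0 (h.trans (mul_one α).symm))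
    beta_reduce
    rw [hψ _ hne']
    have hden : α * σ - α ≠ 0 := by
      rw [show α * σ - α = α * (σ - 1) by ring]
      exact mul_ne_zero hα0 hσ1'
    have hx : (α * (α * σ) + d) / (α * σ - α) = d * (σ + 1) / (α * (σ - 1)) := by
      rw [← hα]; field_simp
    rw [hx]
    have hσ1q : (σ - 1) ^ (2 * m) = -σ⁻¹ := by
      have e1 : (σ - 1) ^ (2 * m) * (σ - 1) = σ⁻¹ - 1 := by
        rw [← pow_succ, ← hm, hfs, hσinv, one_pow]
      have e2 : (-σ⁻¹) * (σ - 1) = σ⁻¹ - 1 := by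
        field_simp
        ring
      exact mul_right_cancel₀ hσ1' (e1.trans e2.symm)
    constructor
    · rw [div_pow, mul_pow, mul_pow, hKfix d hdK, hαq]
      rw [show (σ + 1 : F) ^ q = σ ^ q + 1 by rw [hfa, one_pow], hσinv]
      rw [show (σ - 1 : F) ^ q = σ ^ q - 1 by rw [hfs, one_pow], hσinv]
      have hnum : (-α) * (σ⁻¹ - 1) ≠ 0 := by
        refine mul_ne_zero (neg_ne_zero.mpr hα0) ?_
        intro h'
        apply hσ1
        have h1 : σ⁻¹ = 1 := by rwa [sub_eq_zero] at h'
        calc σ = σ * σ⁻¹ := by rw [h1, mul_one]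
          _ = 1 := mul_inv_cancel₀ hσ0
      rw [div_eq_div_iff hnum (mul_ne_zero hα0 hσ1')]
      field_simp
      ring
    · have hts : (d * (σ + 1) / (α * (σ - 1))) ^ 2 - d = 4 * d * σ / (σ - 1) ^ 2 := by
        rw [div_pow, mul_pow, mul_pow, hα]
        rw [div_sub' (mul_ne_zero hd0 (pow_ne_zero 2 hσ1')),
          div_eq_div_iff (mul_ne_zero hd0 (pow_ne_zero 2 hσ1')) (pow_ne_zero 2 hσ1')]
        ring
      rw [hts]
      rw [div_pow, show (4 * d * σ : F) ^ m = 4 ^ m * d ^ m * σ ^ m by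
        rw [mul_pow, mul_pow], h4, hdm, ← pow_mul, hσ1q]
      rw [div_eq_iff (by simpa using hσ0)]
      have hinv : -(σ ^ m) = σ⁻¹ :=
        eq_inv_of_mul_eq_one_left (by rw [neg_mul, ← pow_succ, hσm, neg_neg])
      rw [← hinv]
      ring
  -- assembly
  have hclique : paleyClique (ψ '' ((fun x => α * x) '' Q₁)) := by
    intro x hx y hy hxy
    apply hsq_of_fix (x - y) (sub_ne_zero.mpr hxy)
    rw [hfs, (hmem x hx).1, (hmem y hy).1]
  have hnotin : α ∉ ψ '' ((fun x => α * x) '' Q₁) := fun h =>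
    (hfix_ne α (hmem α h).1).1 rfl
  have hnotin' : -α ∉ ψ '' ((fun x => α * x) '' Q₁) := fun h =>
    (hfix_ne (-α) (hmem (-α) h).1).2 rfl
  have hnosq : ∀ x ∈ ψ '' ((fun x => α * x) '' Q₁),
      ¬ IsSquare (α - x) ∧ ¬ IsSquare (-α - x) := by
    intro x hx
    obtain ⟨hxf, hxm⟩ := hmem x hx
    obtain ⟨hxa, hxa'⟩ := hfix_ne x hxf
    constructor
    · intro hsq
      have hne0 : α - x ≠ 0 := sub_ne_zero.mpr (Ne.symm hxa)
      rw [FiniteField.isSquare_iff hchar hne0, hcard2, pow_mul] at hsq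
      have hN : (α - x) ^ (q + 1) = x ^ 2 - d := by
        rw [pow_succ, hfs, hαq, hxf]
        linear_combination -hα
      rw [hN, hxm] at hsq
      exact hne hsq
    · intro hsq
      have hne0 : -α - x ≠ 0 := sub_ne_zero.mpr (Ne.symm hxa')
      rw [FiniteField.isSquare_iff hchar hne0, hcard2, pow_mul] at hsq
      have hN : (-α - x) ^ (q + 1) = x ^ 2 - d := by
        rw [pow_succ, hfs, Odd.neg_pow hq, hαq, hxf]
        linear_combination -hα
      rw [hN, hxm] at hsq
      exact hne hsq
  refine ⟨fun _ => ⟨hclique, hnotin, fun x hx => (hnosq x hx).1⟩, fun h3 => ?_⟩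
  have hmodd : m % 2 = 1 := by omega
  have hαne : α ≠ -α := by
    intro h
    apply hα0
    have h' : (2 : F) * α = 0 := by linear_combination h
    rcases mul_eq_zero.mp h' with h'' | h''
    · exact absurd h'' h2
    · exact h''
  have hsq2α : IsSquare (α - (-α)) := by
    have hne0 : α - (-α) ≠ 0 := sub_ne_zero.mpr hαne
    rw [FiniteField.isSquare_iff hchar hne0, hcard2, pow_mul]
    have hN : (α - (-α)) ^ (q + 1) = -(4 * d) := by
      rw [pow_succ, hfs, hαq, Odd.neg_pow hq, hαq]
      linear_combination -4 * hα
    rw [hN, show (-(4 * d) : F) = (-1) * 4 * d by ring]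
    rw [mul_pow, mul_pow, h4, hdm]
    rw [Odd.neg_one_pow (Nat.odd_iff.mpr hmodd)]
    ring
  exact ⟨hclique, hαne, hsq2α, hnotin, hnotin', hnosq⟩
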